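/- Let n ≥ 6 and let β = (β_1,…,β_d) be a partition of n all of whose parts satisfy β_i ≥ 3. Then every complex zero of the polynomial G(x) = Σ_{S ⊆ {1,…,d}} (−1)^{d−|S|} binom(x−2+β_S, n−2) has real part 1/2. -/

import Mathlib

open Polynomial
open scoped Classical

/-- The cycle type of a permutation of `Fin n` as a partition of `n`,
including fixed points as parts equal to `1`. -/
noncomputable def fullCycleType {n : ℕ} (σ : Equiv.Perm (Fin n)) : Multiset ℕ :=
  σ.cycleType + Multiset.replicate (n - σ.cycleType.sum) 1

/-- The number of disjoint cycles of a permutation, fixed points included. -/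
noncomputable def numCycles {n : ℕ} (σ : Equiv.Perm (Fin n)) : ℕ :=
  Multiset.card (fullCycleType σ)

/-- The set (conjugacy class) of permutations of `Fin n` with full cycle type `β`. -/
noncomputable def permClass (n : ℕ) (β : Multiset ℕ) : Finset (Equiv.Perm (Fin n)) :=
  Finset.univ.filter (fun ω => fullCycleType ω = β)

/-- The polynomial `P_{[2,n-2],β}(x) = (n(n-1)/|C_β|) ⬝ Σ_{ρ(ω)=β} x^{κ(αω)}`. -/
noncomputable def Pperm {n : ℕ} (α : Equiv.Perm (Fin n)) (β : Multiset ℕ) : Polynomial ℚ :=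
  Polynomial.C (((n : ℚ) * ((n : ℚ) - 1)) / ((permClass n β).card : ℚ)) *
    ∑ ω ∈ permClass n β, Polynomial.X ^ (numCycles (α * ω))

/-- The polynomial `binom(x + c, k)` in `x`: for `k ≥ 0` it is
`(x+c)(x+c-1)⋯(x+c-k+1)/k!`, and it is `0` for `k < 0`. -/
noncomputable def binomPoly (c k : ℤ) : Polynomial ℚ :=
  if 0 ≤ k then
    (((k.toNat).factorial : ℚ))⁻¹ •
      ((descPochhammer ℚ k.toNat).comp (Polynomial.X + Polynomial.C (c : ℚ)))
  else 0

/-- The signless Stirling number of the first kind: the number of permutations of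
an `N`-element set with exactly `m` cycles (fixed points included). -/
noncomputable def stirling1 (N m : ℕ) : ℕ :=
  (Finset.univ.filter (fun σ : Equiv.Perm (Fin N) => numCycles σ = m)).card

/-- For a Young diagram with row lengths `L` (rows and columns 0-indexed),
the product `∏_{u} (t + c(u))` over the cells `u`, `c(u)` being the content. -/
def contentProd (L : List ℕ) (t : ℤ) : ℤ :=
  ∏ i ∈ Finset.range L.length, ∏ j ∈ Finset.range (L.getD i 0), (t + (j : ℤ) - (i : ℤ))

/-- `C(a, b)` for an integer `b`: the usual binomial coefficient when `b ≥ 0`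
(which is `0` for `b > a`), and `0` when `b < 0`. -/
def chooseZ (a : ℕ) (b : ℤ) : ℚ := if 0 ≤ b then (a.choose b.toNat : ℚ) else 0


noncomputable def Complex.abs : AbsoluteValue ℂ ℝ where
  toFun := fun z => ‖z‖
  map_mul' := norm_mul
  nonneg' := norm_nonneg
  eq_zero' := fun _ => norm_eq_zero
  add_le' := norm_add_le

lemma Complex.abs_apply (z : ℂ) : Complex.abs z = Real.sqrt (Complex.normSq z) := rfl

/-- pointwise: root on line `Re = τ`, `x` to the right of `τ - 1/2` -/
lemma abs_sub_lt_abs_add_one_sub {τ : ℝ} {x r : ℂ} (hr : r.re = τ)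
    (hx : τ - 1/2 < x.re) : Complex.abs (x - r) < Complex.abs (x + 1 - r) := by
  rw [Complex.abs_apply, Complex.abs_apply]
  apply Real.sqrt_lt_sqrt (Complex.normSq_nonneg _)
  simp only [Complex.normSq_apply, Complex.sub_re, Complex.sub_im, Complex.add_re,
    Complex.add_im, Complex.one_re, Complex.one_im]
  nlinarith [hx, hr]

lemma abs_add_one_sub_lt_abs_sub {τ : ℝ} {x r : ℂ} (hr : r.re = τ)
    (hx : x.re < τ - 1/2) : Complex.abs (x + 1 - r) < Complex.abs (x - r) := by
  rw [Complex.abs_apply, Complex.abs_apply]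
  apply Real.sqrt_lt_sqrt (Complex.normSq_nonneg _)
  simp only [Complex.normSq_apply, Complex.sub_re, Complex.sub_im, Complex.add_re,
    Complex.add_im, Complex.one_re, Complex.one_im]
  nlinarith [hx, hr]

lemma abs_mono_eval {τ : ℝ} : ∀ (N : ℕ) (S : ℂ[X]), S.natDegree ≤ N →
    (∀ z : ℂ, S.IsRoot z → z.re = τ) → ∀ x : ℂ, τ - 1/2 < x.re →
    Complex.abs (S.eval x) ≤ Complex.abs (S.eval (x + 1)) := by
  intro N
  induction N with
  | zero =>
    intro S hdeg _ x _
    rcases Polynomial.natDegree_eq_zero.mp (Nat.le_zero.mp hdeg) with ⟨s, rfl⟩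
    simp
  | succ N ih =>
    intro S hdeg hroots x hx
    by_cases h0 : S = 0
    · simp [h0]
    by_cases hd : S.natDegree = 0
    · rcases Polynomial.natDegree_eq_zero.mp hd with ⟨s, rfl⟩
      simp
    · obtain ⟨r, hr⟩ := IsAlgClosed.exists_root (k := ℂ) S (by
        simp [Polynomial.degree_eq_natDegree h0, hd])
      obtain ⟨S₁, rfl⟩ := (Polynomial.dvd_iff_isRoot.mpr hr)
      have hS₁0 : S₁ ≠ 0 := by
        intro h; apply h0; rw [h, mul_zero]
      have hdeg₁ : S₁.natDegree ≤ N := by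
        have := Polynomial.natDegree_mul (Polynomial.X_sub_C_ne_zero r) hS₁0
        rw [Polynomial.natDegree_X_sub_C] at this
        omega
      have hroots₁ : ∀ z : ℂ, S₁.IsRoot z → z.re = τ := by
        intro z hz
        exact hroots z (by simp [Polynomial.IsRoot, hz.eq_zero])
      have hrre : r.re = τ := hroots r hr
      simp only [Polynomial.eval_mul, Polynomial.eval_sub, Polynomial.eval_X, Polynomial.eval_C,
        map_mul]
      exact mul_le_mul (le_of_lt (abs_sub_lt_abs_add_one_sub hrre hx))
        (ih S₁ hdeg₁ hroots₁ x hx) (Complex.abs.nonneg _) (Complex.abs.nonneg _)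

lemma abs_antimono_eval {τ : ℝ} : ∀ (N : ℕ) (S : ℂ[X]), S.natDegree ≤ N →
    (∀ z : ℂ, S.IsRoot z → z.re = τ) → ∀ x : ℂ, x.re < τ - 1/2 →
    Complex.abs (S.eval (x + 1)) ≤ Complex.abs (S.eval x) := by
  intro N
  induction N with
  | zero =>
    intro S hdeg _ x _
    rcases Polynomial.natDegree_eq_zero.mp (Nat.le_zero.mp hdeg) with ⟨s, rfl⟩
    simp
  | succ N ih =>
    intro S hdeg hroots x hx
    by_cases h0 : S = 0
    · simp [h0]
    by_cases hd : S.natDegree = 0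
    · rcases Polynomial.natDegree_eq_zero.mp hd with ⟨s, rfl⟩
      simp
    · obtain ⟨r, hr⟩ := IsAlgClosed.exists_root (k := ℂ) S (by
        simp [Polynomial.degree_eq_natDegree h0, hd])
      obtain ⟨S₁, rfl⟩ := (Polynomial.dvd_iff_isRoot.mpr hr)
      have hS₁0 : S₁ ≠ 0 := by
        intro h; apply h0; rw [h, mul_zero]
      have hdeg₁ : S₁.natDegree ≤ N := by
        have := Polynomial.natDegree_mul (Polynomial.X_sub_C_ne_zero r) hS₁0
        rw [Polynomial.natDegree_X_sub_C] at this
        omega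
      have hroots₁ : ∀ z : ℂ, S₁.IsRoot z → z.re = τ := by
        intro z hz
        exact hroots z (by simp [Polynomial.IsRoot, hz.eq_zero])
      have hrre : r.re = τ := hroots r hr
      have key : Complex.abs (x + 1 - r) ≤ Complex.abs (x - r) := by
        rw [Complex.abs_apply, Complex.abs_apply]
        apply Real.sqrt_le_sqrt
        simp only [Complex.normSq_apply, Complex.sub_re, Complex.sub_im, Complex.add_re,
          Complex.add_im, Complex.one_re, Complex.one_im]
        nlinarith [hx, hrre]
      simp only [Polynomial.eval_mul, Polynomial.eval_sub, Polynomial.eval_X, Polynomial.eval_C,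
        map_mul]
      exact mul_le_mul key (ih S₁ hdeg₁ hroots₁ x hx) (Complex.abs.nonneg _)
        (Complex.abs.nonneg _)

/-- Right of the critical line, `|u S(x+1)| > |v S(x)|` whenever `|v| < |u|`. -/
lemma keyB {τ : ℝ} (S : ℂ[X])
    (hroots : ∀ z : ℂ, S.IsRoot z → z.re = τ) {x u v : ℂ}
    (hx : τ - 1/2 < x.re) (huv : Complex.abs v < Complex.abs u) :
    Complex.abs (v * S.eval x) < Complex.abs (u * S.eval (x + 1)) := by
  have hx1 : S.eval (x + 1) ≠ 0 := by
    intro h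
    have := hroots (x + 1) h
    simp only [Complex.add_re, Complex.one_re] at this
    linarith
  have hu : Complex.abs u > 0 := lt_of_le_of_lt (Complex.abs.nonneg v) huv
  rw [map_mul, map_mul]
  by_cases hxS : S.eval x = 0
  · rw [hxS]
    simp only [map_zero, mul_zero]
    exact mul_pos hu (by simpa [Complex.abs.pos_iff] using hx1)
  · calc Complex.abs v * Complex.abs (S.eval x)
        < Complex.abs u * Complex.abs (S.eval x) := by
          apply mul_lt_mul_of_pos_right huv
          simpa [Complex.abs.pos_iff] using hxS
      _ ≤ Complex.abs u * Complex.abs (S.eval (x + 1)) := by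
          apply mul_le_mul_of_nonneg_left
            (abs_mono_eval S.natDegree S le_rfl hroots x hx) (le_of_lt hu)

/-- Left of the critical line, `|u S(x+1)| < |v S(x)|` whenever `|u| < |v|`. -/
lemma keyB' {τ : ℝ} (S : ℂ[X])
    (hroots : ∀ z : ℂ, S.IsRoot z → z.re = τ) {x u v : ℂ}
    (hx : x.re < τ - 1/2) (huv : Complex.abs u < Complex.abs v) :
    Complex.abs (u * S.eval (x + 1)) < Complex.abs (v * S.eval x) := by
  have hx0 : S.eval x ≠ 0 := by
    intro h
    have := hroots x h
    linarith
  have hv : Complex.abs v > 0 := lt_of_le_of_lt (Complex.abs.nonneg u) huv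
  rw [map_mul, map_mul]
  by_cases hxS : S.eval (x + 1) = 0
  · rw [hxS]
    simp only [map_zero, mul_zero]
    exact mul_pos hv (by simpa [Complex.abs.pos_iff] using hx0)
  · calc Complex.abs u * Complex.abs (S.eval (x + 1))
        < Complex.abs v * Complex.abs (S.eval (x + 1)) := by
          apply mul_lt_mul_of_pos_right huv
          simpa [Complex.abs.pos_iff] using hxS
      _ ≤ Complex.abs v * Complex.abs (S.eval x) := by
          apply mul_le_mul_of_nonneg_left
            (abs_antimono_eval S.natDegree S le_rfl hroots x hx) (le_of_lt hv)

lemma abs_closer_right {a b : ℂ} (ha : a.im = 0) (hb : b.im = 0) (hba : b.re < a.re)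
    {x : ℂ} (h : (a.re + b.re)/2 < x.re) : Complex.abs (x - a) < Complex.abs (x - b) := by
  rw [Complex.abs_apply, Complex.abs_apply]
  apply Real.sqrt_lt_sqrt (Complex.normSq_nonneg _)
  simp only [Complex.normSq_apply, Complex.sub_re, Complex.sub_im, ha, hb]
  nlinarith [h, hba]

lemma abs_closer_left {a b : ℂ} (ha : a.im = 0) (hb : b.im = 0) (hba : b.re < a.re)
    {x : ℂ} (h : x.re < (a.re + b.re)/2) : Complex.abs (x - b) < Complex.abs (x - a) := by
  rw [Complex.abs_apply, Complex.abs_apply]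
  apply Real.sqrt_lt_sqrt (Complex.normSq_nonneg _)
  simp only [Complex.normSq_apply, Complex.sub_re, Complex.sub_im, ha, hb]
  nlinarith [h, hba]

/-- the forced real-root factor `∏_{i<m} (X - (i+2))` -/
noncomputable def Bp (m : ℕ) : ℂ[X] := ∏ i ∈ Finset.range m, (X - C ((i:ℂ) + 2))

/-- The invariant maintained while multiplying in unimodular root factors. -/
def InvP (k n : ℕ) (P : ℂ[X]) : Prop :=
  P = 0 ∨ ∃ c : ℂ, ∃ S : ℂ[X], c ≠ 0 ∧ S ≠ 0 ∧
    (∀ z : ℂ, S.IsRoot z → z.re = ((k:ℝ) + 3 - n)/2) ∧ P = C c * Bp (k - n) * S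

lemma Bp_succ (j : ℕ) : Bp (j+1) = Bp j * (X - C ((j:ℂ) + 2)) :=
  Finset.prod_range_succ _ _

lemma Bp_comp_succ (j : ℕ) : (Bp (j+1)).comp (X + 1) = (X - C 1) * Bp j := by
  have h1 : (Bp (j+1)).comp (X + 1) = ∏ i ∈ Finset.range (j+1), (X - C ((i:ℂ) + 1)) := by
    rw [Bp, comp_eq_aeval, map_prod]
    apply Finset.prod_congr rfl
    intro i _
    rw [map_sub, aeval_X, aeval_C]
    have h2 : (algebraMap ℂ ℂ[X]) ((i:ℂ) + 2) = C ((i:ℂ) + 1) + 1 := by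
      rw [Polynomial.algebraMap_eq, C_add, C_add, C_1]
      rw [show ((2:ℂ)) = 1 + 1 by norm_num, C_add, C_1]
      ring
    rw [h2]; ring
  rw [h1, Finset.prod_range_succ']
  rw [mul_comm, Bp]
  congr 1
  · norm_num
  · apply Finset.prod_congr rfl
    intro i _
    congr 1
    rw [C_add, C_add, C_1, show ((2:ℂ)) = 1 + 1 by norm_num, C_add, C_1]
    rw [Nat.cast_add, Nat.cast_one, C_add, C_1, add_assoc]

lemma constant_case {S : ℂ[X]} {ζ : ℂ} (hS0 : S ≠ 0) (hcon : S.natDegree = 0)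
    {w : ℂ} (heval : S.eval (w + 1) = ζ * S.eval w) : ζ = 1 := by
  obtain ⟨s, rfl⟩ := Polynomial.natDegree_eq_zero.mp hcon
  have hs : s ≠ 0 := fun h => hS0 (by rw [h, map_zero])
  simp only [eval_C] at heval
  have h2 : (ζ - 1) * s = 0 := by linear_combination -heval
  rcases mul_eq_zero.mp h2 with h | h
  · exact sub_eq_zero.mp h
  · exact absurd h hs

lemma step_inv {k n : ℕ} {P : ℂ[X]} {ζ : ℂ} (hζ : Complex.abs ζ = 1)
    (h : InvP k n P) : InvP k (n+1) (P.comp (X + 1) - C ζ * P) := by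
  rcases h with h0 | ⟨c, S, hc, hS0, hroots, rfl⟩
  · left; rw [h0]; simp
  set τ : ℝ := ((k:ℝ) + 3 - n)/2 with hτ
  have htgt : ((k:ℝ) + 3 - ((n+1:ℕ):ℝ))/2 = τ - 1/2 := by push_cast; ring
  rcases hc2 : k - n with _ | j'
  · -- phase 2 : no forced real factor
    have hkn : k ≤ n := Nat.sub_eq_zero_iff_le.mp hc2
    have hj1 : k - (n+1) = 0 := by omega
    set S' : ℂ[X] := S.comp (X + 1) - C ζ * S with hS'
    have hP' : (C c * Bp 0 * S).comp (X + 1) - C ζ * (C c * Bp 0 * S) = C c * Bp 0 * S' := by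
      simp only [Bp, Finset.range_zero, Finset.prod_empty, mul_one, mul_comp, C_comp, hS']
      ring
    rw [hP']
    by_cases h0 : S' = 0
    · left; rw [h0, mul_zero]
    right
    refine ⟨c, S', hc, h0, ?_, by rw [hj1]⟩
    intro z hz
    rw [htgt]
    have heval : S.eval (z + 1) = ζ * S.eval z := by
      have h3 := hz
      simp only [IsRoot, hS', eval_sub, eval_mul, eval_comp, eval_add, eval_X, eval_one,
        eval_C] at h3
      linear_combination h3
    rcases lt_trichotomy z.re (τ - 1/2) with hlt | heq | hgt
    · exfalso
      by_cases hcon : S.natDegree = 0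
      · have hζ1 : ζ = 1 := constant_case hS0 hcon heval
        apply h0
        rw [hS', hζ1]
        obtain ⟨s, rfl⟩ := Polynomial.natDegree_eq_zero.mp hcon
        simp
      · obtain ⟨r₀, hr₀⟩ := IsAlgClosed.exists_root (k := ℂ) S (by
          simp [Polynomial.degree_eq_natDegree hS0, hcon])
        obtain ⟨S₁, hfac⟩ := Polynomial.dvd_iff_isRoot.mpr hr₀
        have hroots₁ : ∀ z : ℂ, S₁.IsRoot z → z.re = τ := fun z hz =>
          hroots z (by simp [IsRoot, hfac, hz.eq_zero])
        have hr₀re : r₀.re = τ := hroots r₀ hr₀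
        have hequ : (z + 1 - r₀) * S₁.eval (z + 1) = (ζ * (z - r₀)) * S₁.eval z := by
          have h1 := heval
          rw [hfac] at h1
          simp only [eval_mul, eval_sub, eval_X, eval_C] at h1
          linear_combination h1
        have h4 := keyB' S₁ hroots₁ hlt (u := z + 1 - r₀) (v := ζ * (z - r₀)) (by
          rw [map_mul, hζ, one_mul]
          exact abs_add_one_sub_lt_abs_sub hr₀re hlt)
        rw [hequ] at h4
        exact lt_irrefl _ h4
    · exact heq
    · exfalso
      by_cases hcon : S.natDegree = 0
      · have hζ1 : ζ = 1 := constant_case hS0 hcon heval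
        apply h0
        rw [hS', hζ1]
        obtain ⟨s, rfl⟩ := Polynomial.natDegree_eq_zero.mp hcon
        simp
      · obtain ⟨r₀, hr₀⟩ := IsAlgClosed.exists_root (k := ℂ) S (by
          simp [Polynomial.degree_eq_natDegree hS0, hcon])
        obtain ⟨S₁, hfac⟩ := Polynomial.dvd_iff_isRoot.mpr hr₀
        have hroots₁ : ∀ z : ℂ, S₁.IsRoot z → z.re = τ := fun z hz =>
          hroots z (by simp [IsRoot, hfac, hz.eq_zero])
        have hr₀re : r₀.re = τ := hroots r₀ hr₀
        have hequ : (z + 1 - r₀) * S₁.eval (z + 1) = (ζ * (z - r₀)) * S₁.eval z := by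
          have h1 := heval
          rw [hfac] at h1
          simp only [eval_mul, eval_sub, eval_X, eval_C] at h1
          linear_combination h1
        have h4 := keyB S₁ hroots₁ hgt (u := z + 1 - r₀) (v := ζ * (z - r₀)) (by
          rw [map_mul, hζ, one_mul]
          exact abs_sub_lt_abs_add_one_sub hr₀re hgt)
        rw [hequ] at h4
        exact lt_irrefl _ h4
  · -- phase 1 : forced real factor present
    have hkeq : k = n + j' + 1 := by omega
    have hcast : (k:ℝ) = (n:ℝ) + j' + 1 := by rw [hkeq]; push_cast; ring
    have hτval : τ = ((j':ℝ) + 4)/2 := by rw [hτ, hcast]; ring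
    have hjn : k - (n+1) = j' := by omega
    set S' : ℂ[X] := (X - C 1) * S.comp (X + 1) - C ζ * ((X - C ((j':ℂ) + 2)) * S) with hS'
    have hP' : (C c * Bp (j'+1) * S).comp (X + 1) - C ζ * (C c * Bp (j'+1) * S)
        = C c * Bp j' * S' := by
      rw [mul_comp, mul_comp, C_comp, Bp_comp_succ]
      conv_lhs => rw [Bp_succ]
      rw [hS']
      ring
    rw [hP']
    by_cases h0 : S' = 0
    · left; rw [h0, mul_zero]
    right
    refine ⟨c, S', hc, h0, ?_, by rw [hjn]⟩
    intro z hz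
    rw [htgt]
    have heval : (z - 1) * S.eval (z + 1) = (ζ * (z - ((j':ℂ) + 2))) * S.eval z := by
      have h3 := hz
      simp only [IsRoot, hS', eval_sub, eval_mul, eval_comp, eval_add, eval_X, eval_one,
        eval_C] at h3
      linear_combination h3
    have hjnn : (0:ℝ) ≤ (j':ℝ) := Nat.cast_nonneg _
    have him1 : ((j':ℂ) + 2).im = 0 := by simp
    have him2 : ((1:ℂ)).im = 0 := by simp
    have hre1 : ((j':ℂ) + 2).re = (j':ℝ) + 2 := by simp
    have hre2 : ((1:ℂ)).re = 1 := by simp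
    have hbalt : (1:ℝ) < (j':ℝ) + 2 := by linarith
    rcases lt_trichotomy z.re (τ - 1/2) with hlt | heq | hgt
    · exfalso
      have habs : Complex.abs (z - 1) < Complex.abs (ζ * (z - ((j':ℂ) + 2))) := by
        rw [map_mul, hζ, one_mul]
        have h5 := abs_closer_left (a := (j':ℂ) + 2) (b := 1) him1 him2
          (by rw [hre1, hre2]; linarith)
          (x := z) (by rw [hre1, hre2]; rw [hτval] at hlt; linarith)
        exact h5
      have h4 := keyB' S hroots hlt (u := z - 1) (v := ζ * (z - ((j':ℂ) + 2))) habs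
      rw [heval] at h4
      exact lt_irrefl _ h4
    · exact heq
    · exfalso
      have habs : Complex.abs (ζ * (z - ((j':ℂ) + 2))) < Complex.abs (z - 1) := by
        rw [map_mul, hζ, one_mul]
        have h5 := abs_closer_right (a := (j':ℂ) + 2) (b := 1) him1 him2
          (by rw [hre1, hre2]; linarith)
          (x := z) (by rw [hre1, hre2]; rw [hτval] at hgt; linarith)
        exact h5
      have h4 := keyB S hroots hgt (u := z - 1) (v := ζ * (z - ((j':ℂ) + 2))) habs
      rw [heval] at h4
      exact lt_irrefl _ h4


noncomputable def shiftE : Module.End ℂ (Polynomial ℂ) :=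
  (Polynomial.aeval (X + 1 : ℂ[X])).toLinearMap

noncomputable def Phi (q : ℂ[X]) : Module.End ℂ (Polynomial ℂ) := Polynomial.aeval shiftE q

noncomputable def Pbase (k : ℕ) : ℂ[X] := C ((k.factorial : ℂ)⁻¹) * Bp k

lemma shiftE_apply (P : ℂ[X]) : shiftE P = P.comp (X + 1) := rfl

lemma Phi_mul (a b : ℂ[X]) (P : ℂ[X]) : Phi (a * b) P = Phi a (Phi b P) := by
  rw [Phi, map_mul]; rfl

lemma Phi_lin (ζ : ℂ) (Q : ℂ[X]) : Phi (X - C ζ) Q = Q.comp (X + 1) - C ζ * Q := by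
  rw [Phi, map_sub, aeval_X, aeval_C, LinearMap.sub_apply, shiftE_apply,
    Module.algebraMap_end_apply, smul_eq_C_mul]

lemma Phi_one (P : ℂ[X]) : Phi 1 P = P := by
  rw [Phi, map_one, Module.End.one_apply]

lemma Phi_X_pow (m : ℕ) : ∀ P : ℂ[X], Phi (X ^ m) P = P.comp (X + C (m:ℂ)) := by
  induction m with
  | zero => intro P; simp [Phi_one, Phi]
  | succ m ih =>
    intro P
    rw [pow_succ, Phi_mul, ih, Phi, aeval_X, shiftE_apply, Polynomial.comp_assoc]
    congr 1
    rw [add_comp, X_comp, one_comp, Nat.cast_add, Nat.cast_one, C_add, C_1, add_assoc]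

lemma inv0 (k : ℕ) : InvP k 0 (Pbase k) := by
  right
  refine ⟨(k.factorial : ℂ)⁻¹, 1, ?_, one_ne_zero, ?_, ?_⟩
  · exact inv_ne_zero (Nat.cast_ne_zero.mpr k.factorial_ne_zero)
  · intro z hz
    simp [IsRoot] at hz
  · rw [Nat.sub_zero, mul_one, Pbase]

lemma fold_inv (k : ℕ) : ∀ l : List ℂ, (∀ ζ ∈ l, Complex.abs ζ = 1) →
    InvP k l.length (Phi (l.map (fun ζ => X - C ζ)).prod (Pbase k)) := by
  intro l
  induction l with
  | nil => intro _; simpa [Phi_one] using inv0 k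
  | cons ζ t ih =>
    intro hl
    have h1 : ((ζ :: t).map (fun ζ => X - C ζ)).prod
        = (X - C ζ) * (t.map (fun ζ => X - C ζ)).prod := by simp
    rw [h1, Phi_mul, Phi_lin]
    exact step_inv (hl ζ List.mem_cons_self) (ih fun x hx => hl x (List.mem_cons_of_mem _ hx))

section qfacts
variable {d : ℕ} (β : Fin d → ℕ)

noncomputable def qpoly : ℂ[X] := ∏ i, ((X : ℂ[X]) ^ β i - 1)

lemma qpoly_monic (hβ3 : ∀ i, 3 ≤ β i) : (qpoly β).Monic := by
  apply monic_prod_of_monic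
  intro i _
  have := monic_X_pow_sub_C (1:ℂ) (n := β i) (by have := hβ3 i; omega)
  simpa using this

lemma qpoly_natDegree (hβ3 : ∀ i, 3 ≤ β i) (n : ℕ) (hsum : ∑ i, β i = n) : (qpoly β).natDegree = n := by
  rw [qpoly, natDegree_prod]
  · rw [← hsum]
    apply Finset.sum_congr rfl
    intro i _
    have h1 : ((X : ℂ[X]) ^ β i - 1) = X ^ β i - C 1 := by simp
    rw [h1, natDegree_X_pow_sub_C]
  · intro i _
    have := monic_X_pow_sub_C (1:ℂ) (n := β i) (by have := hβ3 i; omega)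
    intro h
    exact this.ne_zero (by simpa using h)

lemma qpoly_roots_abs (hβ3 : ∀ i, 3 ≤ β i) {r : ℂ} (hr : r ∈ (qpoly β).roots) : Complex.abs r = 1 := by
  have hq0 : qpoly β ≠ 0 := (qpoly_monic β hβ3).ne_zero
  have hroot : (qpoly β).IsRoot r := (Polynomial.mem_roots hq0).mp hr
  rw [IsRoot, qpoly, eval_prod] at hroot
  obtain ⟨i, _, hi⟩ := Finset.prod_eq_zero_iff.mp hroot
  simp only [eval_sub, eval_pow, eval_X, eval_one, sub_eq_zero] at hi
  have habs : Complex.abs r ^ β i = 1 := by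
    rw [← map_pow, hi, map_one]
  have hβne : β i ≠ 0 := by have h3 := hβ3 i; omega
  rcases pow_eq_one_iff_cases.mp habs with h | h | h
  · exact absurd h hβne
  · exact h
  · exfalso
    have := Complex.abs.nonneg r
    rw [h.1] at this
    linarith

lemma qpoly_card_roots (hβ3 : ∀ i, 3 ≤ β i) (n : ℕ) (hsum : ∑ i, β i = n) :
    Multiset.card (qpoly β).roots = n := by
  rw [Polynomial.splits_iff_card_roots.mp (IsAlgClosed.splits (qpoly β))]
  exact qpoly_natDegree β hβ3 n hsum

lemma qpoly_eq_prod_roots (hβ3 : ∀ i, 3 ≤ β i) :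
    qpoly β = ((qpoly β).roots.map fun a => X - C a).prod :=
  (prod_multiset_X_sub_C_of_monic_of_roots_card_eq (qpoly_monic β hβ3)
    IsAlgClosed.card_roots_eq_natDegree).symm

end qfacts

lemma descC_prod (k : ℕ) :
    descPochhammer ℂ k = ∏ i ∈ Finset.range k, (X - C (i:ℂ)) := by
  induction k with
  | zero => simp [descPochhammer]
  | succ k ih =>
    rw [descPochhammer_succ_right, ih, Finset.prod_range_succ, Polynomial.C_eq_natCast]

lemma prod_lin_comp (k : ℕ) (g : ℕ → ℂ) (a : ℂ) :
    (∏ i ∈ Finset.range k, (X - C (g i))).comp (X + C a)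
      = ∏ i ∈ Finset.range k, (X + C a - C (g i)) := by
  rw [comp_eq_aeval, map_prod]
  apply Finset.prod_congr rfl
  intro i _
  rw [map_sub, aeval_X, aeval_C, Polynomial.algebraMap_eq]

lemma binom_map (n k : ℕ) (hn2 : 2 ≤ n) (hk : ((n:ℤ) - 2).toNat = k) (m : ℕ) :
    (binomPoly ((m:ℤ) - 2) ((n:ℤ) - 2)).map (algebraMap ℚ ℂ)
      = C ((k.factorial:ℂ)⁻¹)
          * ∏ i ∈ Finset.range k, (X + C ((m:ℂ) - 2) - C ((i:ℂ))) := by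
  have hpos : (0:ℤ) ≤ (n:ℤ) - 2 := by omega
  rw [binomPoly, if_pos hpos, hk, smul_eq_C_mul, Polynomial.map_mul, map_C,
    Polynomial.map_comp, descPochhammer_map, Polynomial.map_add, map_X, map_C]
  congr 1
  · congr 1
    rw [map_inv₀, map_natCast]
  · rw [descC_prod]
    have : (algebraMap ℚ ℂ) (((m:ℤ) - 2 : ℤ) : ℚ) = (m:ℂ) - 2 := by
      push_cast
      norm_num
    rw [this, prod_lin_comp]

lemma Phi_pow_base (n k : ℕ) (hn2 : 2 ≤ n) (hk : ((n:ℤ) - 2).toNat = k) (m : ℕ) :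
    Phi ((X:ℂ[X]) ^ m) (Pbase k)
      = (binomPoly ((m:ℤ) - 2) ((n:ℤ) - 2)).map (algebraMap ℚ ℂ) := by
  rw [binom_map n k hn2 hk m, Phi_X_pow, Pbase, mul_comp, C_comp, Bp, prod_lin_comp]
  congr 1
  apply Finset.prod_congr rfl
  intro i _
  rw [C_add, C_sub]
  ring

lemma qpoly_expand {d : ℕ} (β : Fin d → ℕ) :
    (∏ i, ((X : ℂ[X]) ^ β i - 1))
      = ∑ S : Finset (Fin d), C ((-1:ℂ) ^ (d - S.card)) * X ^ (∑ i ∈ S, β i) := by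
  have h1 : ∀ i : Fin d, ((X : ℂ[X]) ^ β i - 1) = X ^ β i + (-1) := by
    intro i; ring
  simp_rw [h1]
  rw [Finset.prod_add, Finset.powerset_univ]
  apply Finset.sum_congr rfl
  intro S _
  rw [Finset.prod_pow_eq_pow_sum, Finset.prod_const]
  have hcard : (Finset.univ \ S).card = d - S.card := by
    rw [Finset.card_sdiff_of_subset (Finset.subset_univ S), Finset.card_univ, Fintype.card_fin]
  rw [hcard, mul_comm]
  congr 1
  rw [← C_1, ← C_neg, ← map_pow]

lemma Phi_sum {ι : Type*} (s : Finset ι) (f : ι → ℂ[X]) (P : ℂ[X]) :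
    Phi (∑ i ∈ s, f i) P = ∑ i ∈ s, Phi (f i) P := by
  unfold Phi
  rw [map_sum, LinearMap.sum_apply]

lemma Phi_C_mul (a : ℂ) (w P : ℂ[X]) : Phi (C a * w) P = C a * Phi w P := by
  unfold Phi
  rw [map_mul, aeval_C, Module.End.mul_apply, Module.algebraMap_end_apply, smul_eq_C_mul]

lemma G_eq (n d : ℕ) (k : ℕ) (hn2 : 2 ≤ n) (hk : ((n:ℤ) - 2).toNat = k)
    (β : Fin d → ℕ) :
    (∑ S : Finset (Fin d), ((-1 : ℚ) ^ (d - S.card)) •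
        binomPoly ((∑ i ∈ S, β i : ℤ) - 2) ((n : ℤ) - 2)).map (algebraMap ℚ ℂ)
      = Phi (∏ i, ((X:ℂ[X]) ^ β i - 1)) (Pbase k) := by
  rw [qpoly_expand β, Phi_sum]
  rw [← Polynomial.coe_mapRingHom, map_sum]
  apply Finset.sum_congr rfl
  intro S _
  rw [Polynomial.coe_mapRingHom, smul_eq_C_mul, Polynomial.map_mul, map_C, Phi_C_mul]
  congr 1
  · congr 1
    rw [map_pow, map_neg, map_one]
  · have hcast : (∑ i ∈ S, (β i : ℤ)) = ((∑ i ∈ S, β i : ℕ) : ℤ) := by push_cast; rfl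
    rw [hcast, Phi_pow_base n k hn2 hk]

lemma eval2_binom (n k m : ℕ) (hn2 : 2 ≤ n) (hk : ((n:ℤ) - 2).toNat = k) :
    eval (2:ℚ) (binomPoly ((m:ℤ) - 2) ((n:ℤ) - 2))
      = (k.factorial : ℚ)⁻¹ * (m.descFactorial k : ℚ) := by
  have hpos : (0:ℤ) ≤ (n:ℤ) - 2 := by omega
  rw [binomPoly, if_pos hpos, hk, smul_eq_C_mul, eval_mul, eval_C, eval_comp, eval_add,
    eval_X, eval_C]
  congr 1
  have h2 : (2:ℚ) + (((m:ℤ) - 2 : ℤ) : ℚ) = ((m:ℕ) : ℚ) := by push_cast; ring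
  rw [h2, descPochhammer_eval_eq_descFactorial]

lemma eval2_ne_zero (n d : ℕ) (k : ℕ) (hn : 6 ≤ n) (hk : ((n:ℤ) - 2).toNat = k)
    (β : Fin d → ℕ) (hβ3 : ∀ i, 3 ≤ β i) (hsum : ∑ i, β i = n) :
    eval (2:ℚ) (∑ S : Finset (Fin d), ((-1 : ℚ) ^ (d - S.card)) •
        binomPoly ((∑ i ∈ S, β i : ℤ) - 2) ((n : ℤ) - 2)) ≠ 0 := by
  have hn2 : 2 ≤ n := by omega
  have hkval : k = n - 2 := by omega
  rw [eval_finset_sum]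
  have hterm : ∀ S : Finset (Fin d),
      eval (2:ℚ) (((-1 : ℚ) ^ (d - S.card)) •
        binomPoly ((∑ i ∈ S, β i : ℤ) - 2) ((n : ℤ) - 2))
      = (-1:ℚ) ^ (d - S.card) *
          ((k.factorial : ℚ)⁻¹ * ((∑ i ∈ S, β i).descFactorial k : ℚ)) := by
    intro S
    have hcast : (∑ i ∈ S, (β i : ℤ)) = ((∑ i ∈ S, β i : ℕ) : ℤ) := by push_cast; rfl
    rw [smul_eq_C_mul, eval_mul, eval_C, hcast, eval2_binom n k _ hn2 hk]
  simp_rw [hterm]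
  rw [Finset.sum_eq_single_of_mem Finset.univ (Finset.mem_univ _)]
  · rw [hsum, Finset.card_univ, Fintype.card_fin, Nat.sub_self, pow_zero, one_mul]
    apply mul_ne_zero
    · exact inv_ne_zero (Nat.cast_ne_zero.mpr k.factorial_ne_zero)
    · rw [Nat.cast_ne_zero]
      intro h0
      have := Nat.descFactorial_eq_zero_iff_lt.mp h0
      omega
  · intro S _ hS
    have hlt : (∑ i ∈ S, β i) < k := by
      have hex : ∃ i, i ∉ S := by
        by_contra hall
        push_neg at hall
        exact hS (Finset.eq_univ_iff_forall.mpr hall)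
      obtain ⟨i, hi⟩ := hex
      have h1 : β i + ∑ j ∈ S, β j ≤ n := by
        rw [← Finset.sum_insert hi, ← hsum]
        exact Finset.sum_le_sum_of_subset (Finset.subset_univ _)
      have h3 := hβ3 i
      omega
    rw [Nat.descFactorial_of_lt hlt]
    simp

/-- every complex zero of
`G(x) = Σ_{S ⊆ [d]} (−1)^{d−|S|} binom(x−2+β_S, n−2)` has real part `1/2`. -/
theorem G_half_real_part_zeros (n d : ℕ) (hn : 6 ≤ n) (β : Fin d → ℕ)
    (hβ3 : ∀ i, 3 ≤ β i) (hsum : ∑ i, β i = n) :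
    ∀ z : ℂ,
      Polynomial.aeval z
          (∑ S : Finset (Fin d), ((-1 : ℚ) ^ (d - S.card)) •
            binomPoly ((∑ i ∈ S, β i : ℤ) - 2) ((n : ℤ) - 2)) = 0 →
        z.re = 1 / 2 := by
  intro z hz
  have hk : ((n:ℤ) - 2).toNat = n - 2 := by omega
  have hn2 : 2 ≤ n := by omega
  set Gq : Polynomial ℚ := ∑ S : Finset (Fin d), ((-1 : ℚ) ^ (d - S.card)) •
      binomPoly ((∑ i ∈ S, β i : ℤ) - 2) ((n : ℤ) - 2) with hGqdef
  have hGq2 := eval2_ne_zero n d (n-2) hn hk β hβ3 hsum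
  have hGqne : Gq ≠ 0 := fun h => hGq2 (by rw [← hGqdef, h]; simp)
  have hGc : Gq.map (algebraMap ℚ ℂ) = Phi (qpoly β) (Pbase (n-2)) := by
    rw [hGqdef]
    exact G_eq n d (n-2) hn2 hk β
  set l : List ℂ := (qpoly β).roots.toList with hldef
  have hl1 : ∀ ζ ∈ l, Complex.abs ζ = 1 := fun ζ h =>
    qpoly_roots_abs β hβ3 (Multiset.mem_toList.mp h)
  have hfold := fold_inv (n-2) l hl1
  have hlen : l.length = n := by
    rw [hldef, Multiset.length_toList]
    exact qpoly_card_roots β hβ3 n hsum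
  have hprod : (l.map (fun ζ => X - C ζ)).prod = qpoly β := by
    conv_rhs => rw [qpoly_eq_prod_roots β hβ3]
    have h5 : Multiset.map (fun a : ℂ => X - C a) (qpoly β).roots
        = ↑(List.map (fun a : ℂ => X - C a) (qpoly β).roots.toList) := by
      rw [← Multiset.map_coe, Multiset.coe_toList]
    rw [hldef, h5, Multiset.prod_coe]
  rw [hlen, hprod, ← hGc] at hfold
  rcases hfold with h0 | ⟨c, S, hc, hS0, hroots, heq⟩
  · exfalso
    exact hGqne (Polynomial.map_injective _ (algebraMap ℚ ℂ).injective
      (by rw [h0, Polynomial.map_zero]))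
  · have hz' : eval z (Gq.map (algebraMap ℚ ℂ)) = 0 := by
      rw [Polynomial.eval_map, ← Polynomial.aeval_def]
      exact hz
    have hk0 : (n - 2) - n = 0 := by omega
    rw [hk0] at heq
    have hBp0 : Bp 0 = 1 := by simp [Bp]
    rw [hBp0, mul_one] at heq
    have hSz : S.IsRoot z := by
      rw [heq, eval_mul, eval_C, mul_eq_zero] at hz'
      rcases hz' with h | h
      · exact absurd h hc
      · exact h
    have hre := hroots z hSz
    have hcast : (((n-2:ℕ)):ℝ) = (n:ℝ) - 2 := by
      rw [Nat.cast_sub hn2]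
      norm_num
    rw [hcast] at hre
    rw [hre]
    ring
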